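/- arXiv:2512.08176 — 2 statements merged into one kernel-verified Lean document; each statement's English description precedes it below -/
import Mathlib

section
/- Let ℋ be a real Hilbert space and M : ℋ × ℝ^p → ℝ be differentiable with coordinate l-Lipschitz partial gradients, let 𝒯 ⊆ ℋ (not assumed convex) and μ ∈ (0,l] be such that θ ↦ M(T,θ) is μ-strongly concave for every T ∈ 𝒯, with unique maximizer θ*[T], and set Ψ(T) := max_{θ∈ℝ^p} M(T,θ) = M(T,θ*[T]) and κ = l/μ. Then for all T, T̃ ∈ 𝒯, Ψ(T̃) − Ψ(T) ≤ ⟨∂_TM(T,θ*[T]), T̃ − T⟩ + (L₂/2)‖T̃ − T‖², where L₂ = l(1+κ²). -/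
open MeasureTheory
open scoped RealInnerProductSpace

noncomputable section

theorem descent {H : Type*} [NormedAddCommGroup H] [InnerProductSpace ℝ H] [CompleteSpace H]
    (f : H → ℝ) (g : H → H) (l : ℝ)
    (hg : ∀ x, HasGradientAt f (g x) x)
    (hLip : ∀ x y, ‖g y - g x‖ ≤ l * ‖y - x‖) (x y : H) :
    f y ≤ f x + ⟪g x, y - x⟫ + l / 2 * ‖y - x‖ ^ 2 := by
  set v := y - x with hv
  set φ : ℝ → ℝ := fun t => f (x + t • v) - t * ⟪g x, v⟫ - l * t ^ 2 / 2 * ‖v‖ ^ 2 with hφ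
  have hderiv : ∀ t : ℝ, HasDerivAt φ (⟪g (x + t • v), v⟫ - ⟪g x, v⟫ - l * t * ‖v‖ ^ 2) t := by
    intro t
    have hc : HasDerivAt (fun t : ℝ => x + t • v) v t := by
      simpa using ((hasDerivAt_id t).smul_const v).const_add x
    have h1 : HasDerivAt (fun t : ℝ => f (x + t • v)) (⟪g (x + t • v), v⟫) t := by
      have := ((hg (x + t • v)).hasFDerivAt.comp_hasDerivAt t hc)
      simp at this
      exact this
    have h2 : HasDerivAt (fun t : ℝ => t * ⟪g x, v⟫) (⟪g x, v⟫) t := by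
      simpa using (hasDerivAt_id t).mul_const (⟪g x, v⟫)
    have h3 : HasDerivAt (fun t : ℝ => l * t ^ 2 / 2 * ‖v‖ ^ 2) (l * t * ‖v‖ ^ 2) t := by
      have : HasDerivAt (fun t : ℝ => t ^ 2) (2 * t) t := by
        simpa using hasDerivAt_pow 2 t
      have := ((this.const_mul l).div_const 2).mul_const (‖v‖ ^ 2)
      exact this.congr_deriv (by ring)
    exact (h1.sub h2).sub h3
  have hanti : AntitoneOn φ (Set.Icc 0 1) := by
    apply antitoneOn_of_deriv_nonpos (convex_Icc 0 1)
    · exact fun t _ => (hderiv t).continuousAt.continuousWithinAt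
    · exact fun t _ => ((hderiv t).differentiableAt).differentiableWithinAt
    · intro t ht
      rw [interior_Icc] at ht
      rw [(hderiv t).deriv]
      have h1 : ⟪g (x + t • v) - g x, v⟫ ≤ l * t * ‖v‖ ^ 2 := by
        calc ⟪g (x + t • v) - g x, v⟫ ≤ ‖g (x + t • v) - g x‖ * ‖v‖ :=
              real_inner_le_norm _ _
          _ ≤ (l * ‖(x + t • v) - x‖) * ‖v‖ := by
              have := hLip x (x + t • v)
              nlinarith [norm_nonneg v]
          _ = l * t * ‖v‖ ^ 2 := by
              rw [add_sub_cancel_left, norm_smul, Real.norm_eq_abs,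
                abs_of_pos ht.1]; ring
      rw [inner_sub_left] at h1
      linarith
  have := hanti (Set.left_mem_Icc.2 one_pos.le) (Set.right_mem_Icc.2 one_pos.le) one_pos.le
  simp only [hφ, one_smul, zero_smul, add_zero, one_pow] at this
  have h10 : f (x + v) - 1 * ⟪g x, v⟫ - l * 1 / 2 * ‖v‖ ^ 2 ≤ f x - 0 * ⟪g x, v⟫ - l * 0 ^ 2 / 2 * ‖v‖ ^ 2 := by
    simpa using this
  have hxy : x + v = y := by rw [hv]; abel
  rw [hxy] at h10
  nlinarith [h10]

theorem concave_first_order {E : Type*} [NormedAddCommGroup E] [InnerProductSpace ℝ E] [CompleteSpace E]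
    (h : E → ℝ) (G : E) (x y : E) (hc : ConcaveOn ℝ Set.univ h)
    (hg : HasGradientAt h G x) : h y ≤ h x + ⟪G, y - x⟫ := by
  set v := y - x with hv
  set ψ : ℝ → ℝ := fun t => h (x + t • v) with hψ
  have hcψ : ConcaveOn ℝ Set.univ ψ := by
    have := hc.comp_affineMap (AffineMap.lineMap x y : ℝ →ᵃ[ℝ] E)
    simp only [Set.preimage_univ] at this
    have hfun : ψ = h ∘ ⇑(AffineMap.lineMap x y : ℝ →ᵃ[ℝ] E) := by
      funext t
      simp [hψ, AffineMap.lineMap_apply, hv]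
      abel_nf
    rw [hfun]; exact this
  have hd : HasDerivAt ψ (⟪G, v⟫) 0 := by
    have hc0 : HasDerivAt (fun t : ℝ => x + t • v) v 0 := by
      simpa using ((hasDerivAt_id (0:ℝ)).smul_const v).const_add x
    have hx0 : x + (0:ℝ) • v = x := by simp
    have hg' : HasFDerivAt h ((InnerProductSpace.toDual ℝ E) G) (x + (0:ℝ) • v) := by
      rw [hx0]; exact hg.hasFDerivAt
    have := hg'.comp_hasDerivAt (x := (0:ℝ)) (f := fun t : ℝ => x + t • v) hc0
    simp at this
    exact this
  have hslope := hcψ.slope_le_of_hasDerivAt (Set.mem_univ (0:ℝ)) (Set.mem_univ (1:ℝ)) one_pos hd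
  have hs : slope ψ 0 1 = ψ 1 - ψ 0 := by simp [slope_def_field]
  have h1 : ψ 1 = h y := by simp [hψ, hv]
  have h0 : ψ 0 = h x := by simp [hψ]
  rw [hs, h1, h0] at hslope
  linarith

-- gradient of μ/2 ‖θ‖²
theorem grad_normsq {E : Type*} [NormedAddCommGroup E] [InnerProductSpace ℝ E] [CompleteSpace E]
    (μ : ℝ) (x : E) :
    HasGradientAt (fun θ : E => (μ / 2) * ‖θ‖ ^ 2) (μ • x) x := by
  have h1 : HasFDerivAt (fun θ : E => (⟪θ, θ⟫ : ℝ))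
      ((innerSL ℝ x) + (innerSL ℝ x)) x := by
    have := (hasFDerivAt_id x).inner ℝ (hasFDerivAt_id x)
    refine this.congr_fderiv ?_
    ext v
    simp [real_inner_comm]
  have h2 : HasFDerivAt (fun θ : E => (μ / 2) * ‖θ‖ ^ 2)
      ((μ / 2) • ((innerSL ℝ x) + (innerSL ℝ x))) x := by
    have h3 := h1.const_smul (μ / 2)
    have heq : (fun θ : E => (μ / 2) * ‖θ‖ ^ 2) = fun θ : E => (μ / 2) • (⟪θ, θ⟫ : ℝ) := by
      funext θ
      rw [smul_eq_mul, real_inner_self_eq_norm_sq]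
    rw [heq]
    exact h3
  have : (InnerProductSpace.toDual ℝ E) (μ • x) = (μ / 2) • ((innerSL ℝ x) + (innerSL ℝ x)) := by
    ext v
    simp [InnerProductSpace.toDual_apply_apply, real_inner_smul_left]
    ring
  rw [hasGradientAt_iff_hasFDerivAt, this]
  exact h2

theorem gradAdd {E : Type*} [NormedAddCommGroup E] [InnerProductSpace ℝ E] [CompleteSpace E]
    {f g : E → ℝ} {a b : E} {x : E} (hf : HasGradientAt f a x) (hg : HasGradientAt g b x) :
    HasGradientAt (fun y => f y + g y) (a + b) x := by
  rw [hasGradientAt_iff_hasFDerivAt] at *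
  rw [map_add]
  exact hf.add hg


/-- In the setting of Statement 11, with
`Ψ(T) := max_θ M(T,θ) = M(T,θ*[T])` and `κ = l/μ`, for all `T, T̃ ∈ 𝒯`:
`Ψ(T̃) − Ψ(T) ≤ ⟪∂_TM(T,θ*[T]), T̃ − T⟫ + (L₂/2)‖T̃ − T‖²` with `L₂ = l(1+κ²)`. -/
theorem Psi_descent_inequality
    {p : ℕ} {H : Type*} [NormedAddCommGroup H] [InnerProductSpace ℝ H] [CompleteSpace H]
    (M : H → EuclideanSpace ℝ (Fin p) → ℝ)
    (gT : H → EuclideanSpace ℝ (Fin p) → H)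
    (gθ : H → EuclideanSpace ℝ (Fin p) → EuclideanSpace ℝ (Fin p))
    (l μ : ℝ) (hμpos : 0 < μ) (hμl : μ ≤ l)
    (hgT : ∀ T θ, HasGradientAt (fun T' => M T' θ) (gT T θ) T)
    (hgθ : ∀ T θ, HasGradientAt (fun θ' => M T θ') (gθ T θ) θ)
    (hLip₁ : ∀ T T' θ, ‖gθ T' θ - gθ T θ‖ ≤ l * ‖T' - T‖)
    (hLip₂ : ∀ T θ θ', ‖gθ T θ' - gθ T θ‖ ≤ l * ‖θ' - θ‖)
    (hLip₃ : ∀ T T' θ, ‖gT T' θ - gT T θ‖ ≤ l * ‖T' - T‖)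
    (hLip₄ : ∀ T θ θ', ‖gT T θ' - gT T θ‖ ≤ l * ‖θ' - θ‖)
    (𝒯 : Set H)
    (hconc : ∀ T ∈ 𝒯, ConcaveOn ℝ Set.univ (fun θ => M T θ + (μ / 2) * ‖θ‖ ^ 2))
    (θstar : H → EuclideanSpace ℝ (Fin p))
    (hθmax : ∀ T ∈ 𝒯, ∀ θ, M T θ ≤ M T (θstar T))
    (hθuniq : ∀ T ∈ 𝒯, ∀ θ, (∀ θ', M T θ' ≤ M T θ) → θ = θstar T)
    :
    ∀ T ∈ 𝒯, ∀ T' ∈ 𝒯,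
      M T' (θstar T') - M T (θstar T)
        ≤ ⟪gT T (θstar T), T' - T⟫
          + (l * (1 + (l / μ) ^ 2) / 2) * ‖T' - T‖ ^ 2 := by
  intro T hT T' hT'
  set θ1 := θstar T
  set θ2 := θstar T'
  -- Step 1: gradient vanishes at the maximizer
  have hmax : IsLocalMax (fun θ => M T θ) θ1 :=
    Filter.Eventually.of_forall (hθmax T hT)
  have hgzero : gθ T θ1 = 0 := by
    have h0 := hmax.hasFDerivAt_eq_zero (hgθ T θ1).hasFDerivAt
    have := (InnerProductSpace.toDual ℝ (EuclideanSpace ℝ (Fin p))).injective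
      (a₁ := gθ T θ1) (a₂ := 0) (by rw [h0, map_zero])
    exact this
  -- Step 2: strong concavity bound
  have hB : M T θ2 ≤ M T θ1 - (μ / 2) * ‖θ2 - θ1‖ ^ 2 := by
    have hgrad : HasGradientAt (fun θ => M T θ + (μ / 2) * ‖θ‖ ^ 2)
        (gθ T θ1 + μ • θ1) θ1 := gradAdd (hgθ T θ1) (grad_normsq μ θ1)
    rw [hgzero, zero_add] at hgrad
    have := concave_first_order _ _ θ1 θ2 (hconc T hT) hgrad
    have hinner : ⟪μ • θ1, θ2 - θ1⟫ = μ * (⟪θ1, θ2⟫ - ‖θ1‖ ^ 2) := by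
      rw [real_inner_smul_left, inner_sub_right, real_inner_self_eq_norm_sq]
    have hns : ‖θ2 - θ1‖ ^ 2 = ‖θ2‖ ^ 2 - 2 * ⟪θ2, θ1⟫ + ‖θ1‖ ^ 2 :=
      norm_sub_sq_real θ2 θ1
    have hsym : ⟪θ1, θ2⟫ = ⟪θ2, θ1⟫ := real_inner_comm _ _
    rw [hinner, hsym] at this
    nlinarith [this, hns]
  -- Step 3: descent lemma in T
  have hA : M T' θ2 ≤ M T θ2 + ⟪gT T θ2, T' - T⟫ + l / 2 * ‖T' - T‖ ^ 2 :=
    descent (fun T'' => M T'' θ2) (fun T'' => gT T'' θ2) l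
      (fun x => hgT x θ2) (fun x y => hLip₃ x y θ2) T T'
  -- Step 4: Cauchy–Schwarz + Lipschitz in θ
  have hD : ⟪gT T θ2 - gT T θ1, T' - T⟫ ≤ l * ‖θ2 - θ1‖ * ‖T' - T‖ := by
    calc ⟪gT T θ2 - gT T θ1, T' - T⟫ ≤ ‖gT T θ2 - gT T θ1‖ * ‖T' - T‖ :=
          real_inner_le_norm _ _
      _ ≤ (l * ‖θ2 - θ1‖) * ‖T' - T‖ := by
          have := hLip₄ T θ1 θ2
          nlinarith [norm_nonneg (T' - T)]
      _ = l * ‖θ2 - θ1‖ * ‖T' - T‖ := by ring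
  have hC : ⟪gT T θ2, T' - T⟫ = ⟪gT T θ1, T' - T⟫ + ⟪gT T θ2 - gT T θ1, T' - T⟫ := by
    rw [inner_sub_left]; ring
  -- Young's inequality
  set a := ‖θ2 - θ1‖
  set b := ‖T' - T‖
  have ha : 0 ≤ a := norm_nonneg _
  have hb : 0 ≤ b := norm_nonneg _
  have h2μ : (0:ℝ) < 2 * μ := by positivity
  have hdiv : l ^ 2 / (2 * μ) * (2 * μ) = l ^ 2 := div_mul_cancel₀ _ (ne_of_gt h2μ)
  have hkey : l * a * b ≤ (μ / 2) * a ^ 2 + (l ^ 2 / (2 * μ)) * b ^ 2 := by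
    nlinarith [sq_nonneg (μ * a - l * b), hμpos, hdiv, sq_nonneg b, sq_nonneg a]
  have hkey2 : l ^ 2 / (2 * μ) * b ^ 2 ≤ l * (l / μ) ^ 2 / 2 * b ^ 2 := by
    have h1 : 0 < l := lt_of_lt_of_le hμpos hμl
    have hq : l ^ 2 / (2 * μ) ≤ l * (l / μ) ^ 2 / 2 := by
      rw [div_pow]
      have he : l * (l ^ 2 / μ ^ 2) / 2 = l ^ 3 / (2 * μ ^ 2) := by
        field_simp
      rw [he, div_le_div_iff₀ h2μ (by positivity)]
      nlinarith [mul_le_mul_of_nonneg_left hμl (by positivity : (0:ℝ) ≤ 2 * l ^ 2 * μ)]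
    nlinarith [sq_nonneg b]
  nlinarith [hA, hB, hC, hD, hkey, hkey2]
end
end

section
/- (Lipschitz dependence of the proximal map on θ.) Assume ℓ is C², l₀-smooth, and ρ-weakly convex–weakly concave, and let 0 < s < 1/ρ, so that 1 − s(ρ − 1/γ) > 0 and the proximal map T⁺(T;θ) is well defined. Then for every T ∈ L²(P) and all θ, θ̃ ∈ ℝ^p, ‖T⁺(T;θ̃) − T⁺(T;θ)‖_{L²(P)} ≤ (s l₀ / (1 − s(ρ − 1/γ))) ‖θ̃ − θ‖. -/
open MeasureTheory InnerProductSpace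

noncomputable section

lemma aux_combo_norm_sq {E : Type*} [NormedAddCommGroup E] [InnerProductSpace ℝ E] (a b : E) (t : ℝ) :
    ‖(1-t)•a + t•b‖^2 = (1-t)*‖a‖^2 + t*‖b‖^2 - t*(1-t)*‖a-b‖^2 := by
  have h1 := norm_add_sq_real ((1-t)•a) (t•b)
  have h2 := norm_sub_sq_real a b
  have h3 : ‖(1-t)•a‖^2 = (1-t)^2 * ‖a‖^2 := by
    rw [norm_smul]; simp [mul_pow, sq_abs, Real.norm_eq_abs]
  have h4 : ‖t•b‖^2 = t^2 * ‖b‖^2 := by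
    rw [norm_smul]; simp [mul_pow, sq_abs, Real.norm_eq_abs]
  have h5 : ⟪(1-t)•a, t•b⟫_ℝ = (1-t)*t*⟪a,b⟫_ℝ := by
    rw [real_inner_smul_left, real_inner_smul_right]; ring
  rw [h1, h3, h4, h5]; nlinarith [h2]

lemma aux_lip {E : Type*} [NormedAddCommGroup E] [InnerProductSpace ℝ E] [CompleteSpace E]
    (f : E → ℝ) (g : E → E)
    (hf : ∀ x, HasGradientAt f (g x) x) (C : ℝ) (hC : ∀ x, ‖g x‖ ≤ C) (a b : E) :
    |f b - f a| ≤ C * ‖b - a‖ := by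
  have := Convex.norm_image_sub_le_of_norm_hasFDerivWithin_le
    (f' := fun x => toDual ℝ E (g x))
    (fun x _ => (hf x).hasFDerivAt.hasFDerivWithinAt) (C := C)
    (fun x _ => by rw [(toDual ℝ E).norm_map]; exact hC x)
    convex_univ (Set.mem_univ a) (Set.mem_univ b)
  simpa [Real.norm_eq_abs] using this

lemma aux_growth {E : Type*} [NormedAddCommGroup E] [InnerProductSpace ℝ E] [CompleteSpace E]
    (f : E → ℝ) (g : E → E)
    (hf : ∀ x, HasGradientAt f (g x) x) (c0 l0 : ℝ) (hl0 : 0 ≤ l0)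
    (hg : ∀ w, ‖g w‖ ≤ c0 + l0 * ‖w‖) (v : E) :
    |f v - f 0| ≤ (c0 + l0 * ‖v‖) * ‖v‖ := by
  have := Convex.norm_image_sub_le_of_norm_hasFDerivWithin_le
    (s := Metric.closedBall (0:E) ‖v‖)
    (f' := fun x => toDual ℝ E (g x))
    (fun x _ => (hf x).hasFDerivAt.hasFDerivWithinAt) (C := c0 + l0 * ‖v‖)
    (fun x hx => by
      rw [(toDual ℝ E).norm_map]
      have : ‖x‖ ≤ ‖v‖ := by simpa using hx
      calc ‖g x‖ ≤ c0 + l0 * ‖x‖ := hg x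
        _ ≤ c0 + l0 * ‖v‖ := by nlinarith)
    (convex_closedBall _ _) (x := 0) (y := v) (Metric.mem_closedBall_self (norm_nonneg v))
    (by simp [Metric.mem_closedBall])
  simpa [Real.norm_eq_abs] using this

set_option maxHeartbeats 2000000 in
/-- (Lipschitz dependence of the proximal map on θ.) If `ℓ` is C²,
`l₀`-smooth and ρ-weakly convex–weakly concave, and `0 < s < 1/ρ` (so that
`1 − s(ρ − 1/γ) > 0` and the proximal map `T⁺(T;θ)` is well defined), then
`‖T⁺(T;θ̃) − T⁺(T;θ)‖_{L²(P)} ≤ (s l₀ / (1 − s(ρ − 1/γ))) ‖θ̃ − θ‖`. -/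
theorem proximal_map_lipschitz_in_theta
    {d p : ℕ} (P : Measure (EuclideanSpace ℝ (Fin d))) [IsProbabilityMeasure P]
    (hP2 : Integrable (fun x => ‖x‖ ^ 2) P)
    (ℓ : EuclideanSpace ℝ (Fin p) → EuclideanSpace ℝ (Fin d) → ℝ)
    (gθ : EuclideanSpace ℝ (Fin p) → EuclideanSpace ℝ (Fin d) → EuclideanSpace ℝ (Fin p))
    (gv : EuclideanSpace ℝ (Fin p) → EuclideanSpace ℝ (Fin d) → EuclideanSpace ℝ (Fin d))
    (l₀ γ ρ s : ℝ) (hl₀ : 0 ≤ l₀) (hγ : 0 < γ) (hρ : 0 < ρ)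
    (hs0 : 0 < s) (hs1 : s < 1 / ρ)
    (hgθ : ∀ θ v, HasGradientAt (fun θ' => ℓ θ' v) (gθ θ v) θ)
    (hgv : ∀ θ v, HasGradientAt (fun v' => ℓ θ v') (gv θ v) v)
    (hsmooth : ∀ θ v θ' v',
      Real.sqrt (‖gθ θ' v' - gθ θ v‖ ^ 2 + ‖gv θ' v' - gv θ v‖ ^ 2)
        ≤ l₀ * Real.sqrt (‖θ' - θ‖ ^ 2 + ‖v' - v‖ ^ 2))
    (hwcv : ∀ θ, ConcaveOn ℝ Set.univ (fun v => ℓ θ v - (ρ / 2) * ‖v‖ ^ 2))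
    (hwcθ : ∀ v, ConvexOn ℝ Set.univ (fun θ => ℓ θ v + (ρ / 2) * ‖θ‖ ^ 2))
    (hC2 : ContDiff ℝ 2 (fun q : (EuclideanSpace ℝ (Fin p)) × (EuclideanSpace ℝ (Fin d)) =>
      ℓ q.1 q.2))
    (Tplus : (EuclideanSpace ℝ (Fin d) → EuclideanSpace ℝ (Fin d)) →
      EuclideanSpace ℝ (Fin p) → (EuclideanSpace ℝ (Fin d) → EuclideanSpace ℝ (Fin d)))
    (hTplusL2 : ∀ T, MemLp T 2 P → ∀ θ, MemLp (Tplus T θ) 2 P)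
    (hTplusMin : ∀ T, MemLp T 2 P → ∀ θ, ∀ V, MemLp V 2 P →
      (∫ x, (‖Tplus T θ x - x‖ ^ 2 / (2 * γ) - ℓ θ (Tplus T θ x)) ∂P)
          + (∫ x, ‖Tplus T θ x - T x‖ ^ 2 ∂P) / (2 * s)
        ≤ (∫ x, (‖V x - x‖ ^ 2 / (2 * γ) - ℓ θ (V x)) ∂P)
          + (∫ x, ‖V x - T x‖ ^ 2 ∂P) / (2 * s))
    :
    ∀ T : EuclideanSpace ℝ (Fin d) → EuclideanSpace ℝ (Fin d), MemLp T 2 P →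
      ∀ θ θ' : EuclideanSpace ℝ (Fin p),
        Real.sqrt (∫ x, ‖Tplus T θ' x - Tplus T θ x‖ ^ 2 ∂P)
          ≤ (s * l₀ / (1 - s * (ρ - γ⁻¹))) * ‖θ' - θ‖ := by
  intro T hT θ θ'
  -- constants
  set μ : ℝ := γ⁻¹ + 1/s - ρ with hμdef
  have hsρ : s * ρ < 1 := (lt_div_iff₀ hρ).mp hs1
  have hμpos : 0 < μ := by
    have h1 : ρ < 1/s := by rw [lt_div_iff₀ hs0]; linarith [hsρ]
    have h2 : 0 < γ⁻¹ := inv_pos.mpr hγ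
    rw [hμdef]; linarith
  have hden : 1 - s * (ρ - γ⁻¹) = s * μ := by
    rw [hμdef]; field_simp; ring
  have hconst : s * l₀ / (1 - s * (ρ - γ⁻¹)) = l₀ / μ := by
    rw [hden, mul_comm s l₀, mul_comm s μ, mul_div_mul_right l₀ μ (ne_of_gt hs0)]
  -- gradient bounds
  have hgv_lip_v : ∀ ϑ (v v' : EuclideanSpace ℝ (Fin d)), ‖gv ϑ v' - gv ϑ v‖ ≤ l₀ * ‖v' - v‖ := by
    intro ϑ v v'
    have h := hsmooth ϑ v ϑ v'
    have h1 : ‖gv ϑ v' - gv ϑ v‖ ≤ Real.sqrt (‖gθ ϑ v' - gθ ϑ v‖ ^ 2 + ‖gv ϑ v' - gv ϑ v‖ ^ 2) :=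
      Real.le_sqrt_of_sq_le (by nlinarith [sq_nonneg ‖gθ ϑ v' - gθ ϑ v‖])
    have h2 : Real.sqrt (‖(ϑ:EuclideanSpace ℝ (Fin p)) - ϑ‖ ^ 2 + ‖v' - v‖ ^ 2) = ‖v' - v‖ := by
      simp [Real.sqrt_sq (norm_nonneg _)]
    calc ‖gv ϑ v' - gv ϑ v‖ ≤ _ := h1
      _ ≤ l₀ * Real.sqrt (‖(ϑ:EuclideanSpace ℝ (Fin p)) - ϑ‖ ^ 2 + ‖v' - v‖ ^ 2) := h
      _ = l₀ * ‖v' - v‖ := by rw [h2]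
  have hgv_lip_θ : ∀ ϑ ϑ' (v : EuclideanSpace ℝ (Fin d)), ‖gv ϑ' v - gv ϑ v‖ ≤ l₀ * ‖ϑ' - ϑ‖ := by
    intro ϑ ϑ' v
    have h := hsmooth ϑ v ϑ' v
    have h1 : ‖gv ϑ' v - gv ϑ v‖ ≤ Real.sqrt (‖gθ ϑ' v - gθ ϑ v‖ ^ 2 + ‖gv ϑ' v - gv ϑ v‖ ^ 2) :=
      Real.le_sqrt_of_sq_le (by nlinarith [sq_nonneg ‖gθ ϑ' v - gθ ϑ v‖])
    have h2 : Real.sqrt (‖ϑ' - ϑ‖ ^ 2 + ‖(v:EuclideanSpace ℝ (Fin d)) - v‖ ^ 2) = ‖ϑ' - ϑ‖ := by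
      simp [Real.sqrt_sq (norm_nonneg _)]
    calc ‖gv ϑ' v - gv ϑ v‖ ≤ _ := h1
      _ ≤ l₀ * Real.sqrt (‖ϑ' - ϑ‖ ^ 2 + ‖(v:EuclideanSpace ℝ (Fin d)) - v‖ ^ 2) := h
      _ = l₀ * ‖ϑ' - ϑ‖ := by rw [h2]
  -- integrability facts
  have hid : MemLp (fun x : EuclideanSpace ℝ (Fin d) => x) 2 P :=
    (memLp_two_iff_integrable_sq_norm aestronglyMeasurable_id).mpr hP2
  have sqInt : ∀ (V W : EuclideanSpace ℝ (Fin d) → EuclideanSpace ℝ (Fin d)),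
      MemLp V 2 P → MemLp W 2 P → Integrable (fun x => ‖V x - W x‖^2) P := by
    intro V W hV hW
    exact (memLp_two_iff_integrable_sq_norm (hV.sub hW).aestronglyMeasurable).mp (hV.sub hW)
  have contℓ : ∀ ϑ, Continuous (fun v => ℓ ϑ v) := fun ϑ =>
    hC2.continuous.comp (Continuous.prodMk_right ϑ)
  have ellInt : ∀ ϑ (V : EuclideanSpace ℝ (Fin d) → EuclideanSpace ℝ (Fin d)),
      MemLp V 2 P → Integrable (fun x => ℓ ϑ (V x)) P := by
    intro ϑ V hV
    have hVn : Integrable (fun x => ‖V x‖) P := by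
      have h1 : MemLp V 1 P := hV.mono_exponent (by norm_num)
      exact (memLp_one_iff_integrable.mp h1).norm
    have hVsq : Integrable (fun x => ‖V x‖^2) P :=
      (memLp_two_iff_integrable_sq_norm hV.aestronglyMeasurable).mp hV
    have hb : Integrable (fun x => |ℓ ϑ 0| + ‖gv ϑ 0‖*‖V x‖ + l₀*‖V x‖^2) P :=
      ((integrable_const _).add (hVn.const_mul _)).add (hVsq.const_mul _)
    refine hb.mono' ((contℓ ϑ).comp_aestronglyMeasurable hV.aestronglyMeasurable) ?_
    refine Filter.Eventually.of_forall fun x => ?_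
    have h := aux_growth (fun v => ℓ ϑ v) (gv ϑ) (hgv ϑ) ‖gv ϑ 0‖ l₀ hl₀
      (fun w => by
        have h1 := hgv_lip_v ϑ 0 w
        have h2 : ‖gv ϑ w‖ ≤ ‖gv ϑ 0‖ + ‖gv ϑ w - gv ϑ 0‖ := by
          simpa using norm_add_le (gv ϑ 0) (gv ϑ w - gv ϑ 0)
        simp only [sub_zero] at h1
        linarith) (V x)
    have habs : |ℓ ϑ (V x)| ≤ |ℓ ϑ (V x) - ℓ ϑ 0| + |ℓ ϑ 0| := by
      have := abs_sub_abs_le_abs_sub (ℓ ϑ (V x)) (ℓ ϑ 0); linarith [abs_nonneg (ℓ ϑ 0),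
        abs_sub (ℓ ϑ (V x)) (ℓ ϑ 0)]
    simp only [Real.norm_eq_abs]
    nlinarith [norm_nonneg (V x), h, habs]
  -- the objective functional
  set G : EuclideanSpace ℝ (Fin p) → (EuclideanSpace ℝ (Fin d) → EuclideanSpace ℝ (Fin d)) → ℝ :=
    fun ϑ V => ∫ x, (‖V x - x‖^2/(2*γ) - ℓ ϑ (V x) + ‖V x - T x‖^2/(2*s)) ∂P with hGdef
  have intF : ∀ ϑ (V : EuclideanSpace ℝ (Fin d) → EuclideanSpace ℝ (Fin d)), MemLp V 2 P →
      Integrable (fun x => ‖V x - x‖^2/(2*γ) - ℓ ϑ (V x) + ‖V x - T x‖^2/(2*s)) P := by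
    intro ϑ V hV
    have i1 : Integrable (fun x => ‖V x - x‖^2/(2*γ) - ℓ ϑ (V x)) P :=
      ((sqInt V _ hV hid).div_const _).sub (ellInt ϑ V hV)
    have i2 : Integrable (fun x => ‖V x - T x‖^2/(2*s)) P := (sqInt V T hV hT).div_const _
    exact i1.add i2
  have hGsplit : ∀ ϑ (V : EuclideanSpace ℝ (Fin d) → EuclideanSpace ℝ (Fin d)), MemLp V 2 P →
      G ϑ V = (∫ x, (‖V x - x‖^2/(2*γ) - ℓ ϑ (V x)) ∂P) + (∫ x, ‖V x - T x‖^2 ∂P)/(2*s) := by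
    intro ϑ V hV
    have i1 : Integrable (fun x => ‖V x - x‖^2/(2*γ) - ℓ ϑ (V x)) P :=
      ((sqInt V _ hV hid).div_const _).sub (ellInt ϑ V hV)
    have i2 : Integrable (fun x => ‖V x - T x‖^2/(2*s)) P := (sqInt V T hV hT).div_const _
    simp only [hGdef]
    rw [integral_add i1 i2, integral_div]
  have hmin : ∀ ϑ (V : EuclideanSpace ℝ (Fin d) → EuclideanSpace ℝ (Fin d)), MemLp V 2 P →
      G ϑ (Tplus T ϑ) ≤ G ϑ V := by
    intro ϑ V hV
    rw [hGsplit ϑ _ (hTplusL2 T hT ϑ), hGsplit ϑ V hV]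
    exact hTplusMin T hT ϑ V hV
  -- strong minimality
  have keymin : ∀ ϑ (V : EuclideanSpace ℝ (Fin d) → EuclideanSpace ℝ (Fin d)), MemLp V 2 P →
      G ϑ (Tplus T ϑ) + (μ/2) * ∫ x, ‖V x - Tplus T ϑ x‖^2 ∂P ≤ G ϑ V := by
    intro ϑ V hV
    have hA'2 : MemLp (Tplus T ϑ) 2 P := hTplusL2 T hT ϑ
    set A' := Tplus T ϑ with hA'
    set I := ∫ x, ‖V x - A' x‖^2 ∂P with hIdef
    have hI : (0:ℝ) ≤ I := integral_nonneg fun x => sq_nonneg _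
    have key : ∀ t : ℝ, 0 < t → t < 1 → G ϑ A' + (μ/2) * ((1-t) * I) ≤ G ϑ V := by
      intro t ht0 ht1
      set W : EuclideanSpace ℝ (Fin d) → EuclideanSpace ℝ (Fin d) :=
        fun x => (1-t) • A' x + t • V x with hWdef
      have hW2 : MemLp W 2 P := by
        have := (hA'2.const_smul (1-t)).add (hV.const_smul t)
        exact this
      have pt : ∀ x, ‖W x - x‖^2/(2*γ) - ℓ ϑ (W x) + ‖W x - T x‖^2/(2*s)
          ≤ (1-t) * (‖A' x - x‖^2/(2*γ) - ℓ ϑ (A' x) + ‖A' x - T x‖^2/(2*s))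
            + t * (‖V x - x‖^2/(2*γ) - ℓ ϑ (V x) + ‖V x - T x‖^2/(2*s))
            - (μ/2)*(t*(1-t))*‖V x - A' x‖^2 := by
        intro x
        have hWx : W x = (1-t) • A' x + t • V x := rfl
        have e1 : W x - x = (1-t)•(A' x - x) + t•(V x - x) := by rw [hWx]; module
        have e2 : W x - T x = (1-t)•(A' x - T x) + t•(V x - T x) := by rw [hWx]; module
        have q1 := aux_combo_norm_sq (A' x - x) (V x - x) t
        have q2 := aux_combo_norm_sq (A' x - T x) (V x - T x) t
        have q3 := aux_combo_norm_sq (A' x) (V x) t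
        have e3 : (A' x - x) - (V x - x) = A' x - V x := by abel
        have e4 : (A' x - T x) - (V x - T x) = A' x - V x := by abel
        rw [e3] at q1; rw [e4] at q2
        have hcc := (hwcv ϑ).2 (Set.mem_univ (A' x)) (Set.mem_univ (V x))
          (by linarith : (0:ℝ) ≤ 1-t) (le_of_lt ht0) (by ring)
        simp only [smul_eq_mul] at hcc
        have hll : (1-t)*ℓ ϑ (A' x) + t*ℓ ϑ (V x) - (ρ/2)*(t*(1-t))*‖A' x - V x‖^2
            ≤ ℓ ϑ ((1-t)•A' x + t•V x) := by nlinarith [hcc, q3]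
        have hns : ‖A' x - V x‖ = ‖V x - A' x‖ := norm_sub_rev _ _
        rw [hns] at hll q1 q2
        rw [e1, e2, q1, q2, hWx]
        have hexp : μ/2 = 1/(2*γ) + 1/(2*s) - ρ/2 := by
          rw [hμdef]; field_simp
        rw [hexp]
        have hgi : 1/(2*γ) = (2*γ)⁻¹ := one_div _
        have hsi : 1/(2*s) = (2*s)⁻¹ := one_div _
        rw [hgi, hsi]
        simp only [div_eq_mul_inv]
        nlinarith [hll]
      have j1 : Integrable (fun x =>
          (1-t) * (‖A' x - x‖^2/(2*γ) - ℓ ϑ (A' x) + ‖A' x - T x‖^2/(2*s))) P :=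
        (intF ϑ A' hA'2).const_mul _
      have j2 : Integrable (fun x =>
          t * (‖V x - x‖^2/(2*γ) - ℓ ϑ (V x) + ‖V x - T x‖^2/(2*s))) P :=
        (intF ϑ V hV).const_mul _
      have j3 : Integrable (fun x => (μ/2)*(t*(1-t))*‖V x - A' x‖^2) P :=
        (sqInt V A' hV hA'2).const_mul _
      have j12 : Integrable (fun x =>
          (1-t) * (‖A' x - x‖^2/(2*γ) - ℓ ϑ (A' x) + ‖A' x - T x‖^2/(2*s))
          + t * (‖V x - x‖^2/(2*γ) - ℓ ϑ (V x) + ‖V x - T x‖^2/(2*s))) P := j1.add j2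
      have hintcomb : Integrable (fun x =>
          (1-t) * (‖A' x - x‖^2/(2*γ) - ℓ ϑ (A' x) + ‖A' x - T x‖^2/(2*s))
          + t * (‖V x - x‖^2/(2*γ) - ℓ ϑ (V x) + ‖V x - T x‖^2/(2*s))
          - (μ/2)*(t*(1-t))*‖V x - A' x‖^2) P := j12.sub j3
      have h1 : G ϑ W ≤ ∫ x, ((1-t) * (‖A' x - x‖^2/(2*γ) - ℓ ϑ (A' x) + ‖A' x - T x‖^2/(2*s))
          + t * (‖V x - x‖^2/(2*γ) - ℓ ϑ (V x) + ‖V x - T x‖^2/(2*s))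
          - (μ/2)*(t*(1-t))*‖V x - A' x‖^2) ∂P := by
        simp only [hGdef]
        exact integral_mono (intF ϑ W hW2) hintcomb pt
      have h2 : ∫ x, ((1-t) * (‖A' x - x‖^2/(2*γ) - ℓ ϑ (A' x) + ‖A' x - T x‖^2/(2*s))
          + t * (‖V x - x‖^2/(2*γ) - ℓ ϑ (V x) + ‖V x - T x‖^2/(2*s))
          - (μ/2)*(t*(1-t))*‖V x - A' x‖^2) ∂P
          = (1-t) * G ϑ A' + t * G ϑ V - (μ/2)*(t*(1-t)) * I := by
        rw [integral_sub j12 j3, integral_add j1 j2,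
          integral_const_mul, integral_const_mul, integral_const_mul]
      have h3 := hmin ϑ W hW2
      rw [← hA'] at h3
      have h4 : t * (G ϑ A' + (μ/2) * ((1-t) * I)) ≤ t * G ϑ V := by nlinarith [h3, h1, h2]
      exact le_of_mul_le_mul_left h4 ht0
    by_contra hcon
    push_neg at hcon
    have hc0 : (0:ℝ) ≤ G ϑ V - G ϑ A' := by
      have := key (1/2) (by norm_num) (by norm_num)
      nlinarith [hI, hμpos]
    set c := G ϑ V - G ϑ A' with hcdef
    set K := (μ/2) * I with hKdef
    have hKc : c < K := by rw [hcdef, hKdef]; linarith [hcon]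
    have hKpos : (0:ℝ) < K := lt_of_le_of_lt hc0 hKc
    have ht0' : (0:ℝ) < (K - c)/(2*K) := div_pos (by linarith) (by linarith)
    have ht1' : (K - c)/(2*K) < 1 := by
      rw [div_lt_one (by positivity)]; linarith
    have hkey := key _ ht0' ht1'
    have heq : (μ/2) * ((1 - (K - c)/(2*K)) * I) = (1 - (K - c)/(2*K)) * K := by
      rw [hKdef]; ring
    rw [heq] at hkey
    have hKne : K ≠ 0 := ne_of_gt hKpos
    have hfrac : (K - c)/(2*K) * K = (K - c)/2 := by field_simp
    nlinarith [hkey, hfrac, hKc]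
  -- apply with both parameters
  have hA2 : MemLp (Tplus T θ) 2 P := hTplusL2 T hT θ
  have hB2 : MemLp (Tplus T θ') 2 P := hTplusL2 T hT θ'
  set A := Tplus T θ with hA
  set B := Tplus T θ' with hB
  set I := ∫ x, ‖B x - A x‖^2 ∂P with hIdef
  have hsymm : (∫ x, ‖A x - B x‖^2 ∂P) = I := by
    rw [hIdef]; congr 1; ext x; rw [norm_sub_rev]
  have k1 := keymin θ B hB2
  have k2 := keymin θ' A hA2
  rw [← hA] at k1
  rw [← hB, hsymm] at k2
  rw [← hIdef] at k1
  -- difference identities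
  have d1 : G θ B - G θ' B = ∫ x, (ℓ θ' (B x) - ℓ θ (B x)) ∂P := by
    have e : G θ B - G θ' B
        = ∫ x, ((‖B x - x‖^2/(2*γ) - ℓ θ (B x) + ‖B x - T x‖^2/(2*s))
          - (‖B x - x‖^2/(2*γ) - ℓ θ' (B x) + ‖B x - T x‖^2/(2*s))) ∂P := by
      rw [integral_sub (intF θ B hB2) (intF θ' B hB2)]
    rw [e]; congr 1; funext x; ring
  have d2 : G θ' A - G θ A = ∫ x, (ℓ θ (A x) - ℓ θ' (A x)) ∂P := by
    have e : G θ' A - G θ A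
        = ∫ x, ((‖A x - x‖^2/(2*γ) - ℓ θ' (A x) + ‖A x - T x‖^2/(2*s))
          - (‖A x - x‖^2/(2*γ) - ℓ θ (A x) + ‖A x - T x‖^2/(2*s))) ∂P := by
      rw [integral_sub (intF θ' A hA2) (intF θ A hA2)]
    rw [e]; congr 1; funext x; ring
  have iB : Integrable (fun x => ℓ θ' (B x) - ℓ θ (B x)) P :=
    (ellInt θ' B hB2).sub (ellInt θ B hB2)
  have iA : Integrable (fun x => ℓ θ (A x) - ℓ θ' (A x)) P :=
    (ellInt θ A hA2).sub (ellInt θ' A hA2)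
  have combine : μ * I ≤ ∫ x, ((ℓ θ' (B x) - ℓ θ (B x)) + (ℓ θ (A x) - ℓ θ' (A x))) ∂P := by
    rw [integral_add iB iA]
    have hsum : (∫ x, (ℓ θ' (B x) - ℓ θ (B x)) ∂P) + (∫ x, (ℓ θ (A x) - ℓ θ' (A x)) ∂P)
        = (G θ B - G θ' B) + (G θ' A - G θ A) := by rw [d1, d2]
    rw [hsum]
    have hμI : μ/2 * I + μ/2 * I = μ * I := by ring
    clear_value G I μ
    linarith [k1, k2, hμI]
  set L := l₀ * ‖θ' - θ‖ with hLdef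
  have hL0 : 0 ≤ L := mul_nonneg hl₀ (norm_nonneg _)
  have hphi : ∀ a b : EuclideanSpace ℝ (Fin d),
      (ℓ θ' b - ℓ θ b) - (ℓ θ' a - ℓ θ a) ≤ L * ‖b - a‖ := by
    intro a b
    have hgrad : ∀ v : EuclideanSpace ℝ (Fin d),
        HasGradientAt (fun v => ℓ θ' v - ℓ θ v) (gv θ' v - gv θ v) v := by
      intro v
      have h := (hgv θ' v).hasFDerivAt.sub (hgv θ v).hasFDerivAt
      rw [← map_sub] at h
      simpa [Pi.sub_def] using h.hasGradientAt
    have := aux_lip (fun v => ℓ θ' v - ℓ θ v) (fun v => gv θ' v - gv θ v) hgrad L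
      (fun v => hgv_lip_θ θ θ' v) a b
    calc (ℓ θ' b - ℓ θ b) - (ℓ θ' a - ℓ θ a)
        ≤ |(ℓ θ' b - ℓ θ b) - (ℓ θ' a - ℓ θ a)| := le_abs_self _
      _ ≤ L * ‖b - a‖ := this
  have hI0 : (0:ℝ) ≤ I := integral_nonneg fun x => sq_nonneg _
  rcases eq_or_lt_of_le hI0 with h0 | hpos
  · rw [← h0, Real.sqrt_zero, hconst]
    exact mul_nonneg (div_nonneg hl₀ hμpos.le) (norm_nonneg _)
  · set N := Real.sqrt I with hNdef
    have hN : 0 < N := Real.sqrt_pos.mpr hpos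
    have hN2 : N^2 = I := Real.sq_sqrt hI0
    have ptN : ∀ x, (ℓ θ' (B x) - ℓ θ (B x)) + (ℓ θ (A x) - ℓ θ' (A x))
        ≤ L*(N/2) + (L/(2*N))*‖B x - A x‖^2 := by
      intro x
      have h1 := hphi (A x) (B x)
      have h2 : ‖B x - A x‖ ≤ N/2 + ‖B x - A x‖^2/(2*N) := by
        rw [div_add_div _ _ (by norm_num : (2:ℝ) ≠ 0) (ne_of_gt (by linarith : (0:ℝ) < 2*N))]
        rw [le_div_iff₀ (by positivity)]
        nlinarith [sq_nonneg (N - ‖B x - A x‖)]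
      have h3 : L * ‖B x - A x‖ ≤ L * (N/2 + ‖B x - A x‖^2/(2*N)) :=
        mul_le_mul_of_nonneg_left h2 hL0
      have h4 : L * (N/2 + ‖B x - A x‖^2/(2*N)) = L*(N/2) + (L/(2*N))*‖B x - A x‖^2 := by
        field_simp
      linarith [h1, h3, h4.le, h4.ge]
    have intLHS : Integrable (fun x => (ℓ θ' (B x) - ℓ θ (B x)) + (ℓ θ (A x) - ℓ θ' (A x))) P :=
      iB.add iA
    have intRHS : Integrable (fun x => L*(N/2) + (L/(2*N))*‖B x - A x‖^2) P :=
      (integrable_const _).add ((sqInt B A hB2 hA2).const_mul _)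
    have h5 : (∫ x, ((ℓ θ' (B x) - ℓ θ (B x)) + (ℓ θ (A x) - ℓ θ' (A x))) ∂P)
        ≤ L*(N/2) + (L/(2*N))*I := by
      have := integral_mono intLHS intRHS ptN
      rwa [integral_add (integrable_const _) ((sqInt B A hB2 hA2).const_mul _),
        integral_const, integral_const_mul, probReal_univ, smul_eq_mul,
        one_mul, ← hIdef] at this
    have h6 : (L/(2*N))*I = L*(N/2) := by
      rw [← hN2]; field_simp
    have h7 : μ * N^2 ≤ L * N := by
      rw [hN2]; nlinarith [combine, h5, h6]
    have h8 : N ≤ L/μ := by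
      rw [le_div_iff₀ hμpos]; nlinarith [h7, hN]
    rw [hconst]
    calc N ≤ L/μ := h8
      _ = l₀/μ * ‖θ' - θ‖ := by rw [hLdef]; ring
end
end
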